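/- Let α = e^{2πi/3} and Δ(k) = e^{ik} + e^{-ik} + α(e^{iαk} + e^{-iαk}) + α²(e^{iα²k} + e^{-iα²k}). Then for every real k, Δ(k) = 2[cos k − cos(k/2)cosh(√3k/2) − √3 sin(k/2) sinh(√3k/2)] (in particular Δ(k) ∈ ℝ), and if k > 0 satisfies Δ(k) = 0, then there exists an integer n ≥ 1 such that (2n−1)π < k < 2nπ; in particular Δ has no zero in the interval (0, π]. -/
import Mathlib

noncomputable def cubeRoot : ℂ := Complex.exp (2 * Real.pi * Complex.I / 3)

noncomputable def Δ (k : ℂ) : ℂ :=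
  Complex.exp (Complex.I * k) + Complex.exp (-(Complex.I * k)) +
  cubeRoot * (Complex.exp (Complex.I * cubeRoot * k) + Complex.exp (-(Complex.I * cubeRoot * k))) +
  cubeRoot ^ 2 * (Complex.exp (Complex.I * cubeRoot ^ 2 * k) +
    Complex.exp (-(Complex.I * cubeRoot ^ 2 * k)))

lemma cubeRoot_eq : cubeRoot = -(1/2 : ℂ) + (Real.sqrt 3 / 2 : ℝ) * Complex.I := by
  have h : (2 * Real.pi * Complex.I / 3) = ((2 * Real.pi / 3 : ℝ) : ℂ) * Complex.I := by
    push_cast; ring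
  rw [cubeRoot, h, Complex.exp_mul_I, ← Complex.ofReal_cos, ← Complex.ofReal_sin]
  have hc : Real.cos (2 * Real.pi / 3) = -(1/2) := by
    have : (2 * Real.pi / 3) = Real.pi - Real.pi / 3 := by ring
    rw [this, Real.cos_pi_sub, Real.cos_pi_div_three]
  have hs : Real.sin (2 * Real.pi / 3) = Real.sqrt 3 / 2 := by
    have : (2 * Real.pi / 3) = Real.pi - Real.pi / 3 := by ring
    rw [this, Real.sin_pi_sub, Real.sin_pi_div_three]
  rw [hc, hs]; push_cast; ring

lemma exp_form (x y : ℝ) : Complex.exp ((x : ℂ) + (y : ℝ) * Complex.I) =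
    (Real.exp x : ℝ) * ((Real.cos y : ℝ) + (Real.sin y : ℝ) * Complex.I) := by
  rw [Complex.exp_add, Complex.exp_mul_I, ← Complex.ofReal_cos, ← Complex.ofReal_sin, ← Complex.ofReal_exp]

lemma delta_eq (k : ℝ) : Δ k =
    ((2 * (Real.cos k - Real.cos (k / 2) * Real.cosh (Real.sqrt 3 * k / 2)
      - Real.sqrt 3 * Real.sin (k / 2) * Real.sinh (Real.sqrt 3 * k / 2)) : ℝ) : ℂ) := by
  have h3 : (Real.sqrt 3 : ℂ) ^ 2 = 3 := by
    rw [← Complex.ofReal_pow, Real.sq_sqrt (by norm_num)]; norm_num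
  have e1 : Complex.I * (k : ℂ) = ((0 : ℝ) : ℂ) + (k : ℝ) * Complex.I := by push_cast; ring
  have e2 : -(Complex.I * (k : ℂ)) = ((0 : ℝ) : ℂ) + ((-k : ℝ) : ℂ) * Complex.I := by
    push_cast; ring
  have e3 : Complex.I * cubeRoot * (k : ℂ) =
      ((-(Real.sqrt 3 * k / 2) : ℝ) : ℂ) + ((-(k/2) : ℝ) : ℂ) * Complex.I := by
    rw [cubeRoot_eq]; push_cast
    linear_combination ((Real.sqrt 3 : ℂ) * k / 2) * Complex.I_sq
  have e4 : -(Complex.I * cubeRoot * (k : ℂ)) =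
      ((Real.sqrt 3 * k / 2 : ℝ) : ℂ) + ((k/2 : ℝ) : ℂ) * Complex.I := by
    rw [cubeRoot_eq]; push_cast
    linear_combination (-(Real.sqrt 3 : ℂ) * k / 2) * Complex.I_sq
  have e5 : Complex.I * cubeRoot ^ 2 * (k : ℂ) =
      ((Real.sqrt 3 * k / 2 : ℝ) : ℂ) + ((-(k/2) : ℝ) : ℂ) * Complex.I := by
    rw [cubeRoot_eq]; push_cast
    linear_combination (-(Real.sqrt 3 : ℂ) * k / 2 + 3 * k * Complex.I / 4) * Complex.I_sq + ((k : ℂ) * Complex.I ^ 3 / 4) * h3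
  have e6 : -(Complex.I * cubeRoot ^ 2 * (k : ℂ)) =
      ((-(Real.sqrt 3 * k / 2) : ℝ) : ℂ) + ((k/2 : ℝ) : ℂ) * Complex.I := by
    rw [cubeRoot_eq]; push_cast
    linear_combination ((Real.sqrt 3 : ℂ) * k / 2 - 3 * k * Complex.I / 4) * Complex.I_sq + (-(k : ℂ) * Complex.I ^ 3 / 4) * h3
  rw [Δ, e2, e1, e4, e3, e6, e5, exp_form, exp_form, exp_form, exp_form, exp_form, exp_form,
    cubeRoot_eq, Real.cosh_eq, Real.sinh_eq]
  rw [Real.cos_neg, Real.sin_neg, Real.cos_neg, Real.sin_neg, Real.exp_zero]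
  push_cast
  have hI3 : Complex.I ^ 3 = -Complex.I := by
    rw [pow_succ, Complex.I_sq]; ring
  ring_nf
  simp only [h3, hI3, Complex.I_sq]
  ring

noncomputable def Fr (k : ℝ) : ℝ :=
  Real.cos k - Real.cos (k / 2) * Real.cosh (Real.sqrt 3 * k / 2)
    - Real.sqrt 3 * Real.sin (k / 2) * Real.sinh (Real.sqrt 3 * k / 2)

lemma Fr_neg_of_le_pi {k : ℝ} (hk : 0 < k) (hk' : k ≤ Real.pi) : Fr k < 0 := by
  have hc : Real.cos k < Real.cos (k / 2) :=
    Real.cos_lt_cos_of_nonneg_of_le_pi (by linarith) hk' (by linarith)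
  have hcos : 0 ≤ Real.cos (k / 2) := by
    apply Real.cos_nonneg_of_mem_Icc
    constructor <;> [linarith [Real.pi_pos]; linarith]
  have hsin : 0 ≤ Real.sin (k / 2) := by
    apply Real.sin_nonneg_of_nonneg_of_le_pi (by linarith)
    linarith [Real.pi_pos]
  have hC : 1 ≤ Real.cosh (Real.sqrt 3 * k / 2) := Real.one_le_cosh _
  have hS : 0 ≤ Real.sinh (Real.sqrt 3 * k / 2) := by
    rw [Real.sinh_nonneg_iff]; positivity
  have h3 : 0 ≤ Real.sqrt 3 := Real.sqrt_nonneg 3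
  have h1 : Real.cos (k/2) * 1 ≤ Real.cos (k/2) * Real.cosh (Real.sqrt 3 * k / 2) :=
    mul_le_mul_of_nonneg_left hC hcos
  have h2 : 0 ≤ Real.sqrt 3 * Real.sin (k/2) * Real.sinh (Real.sqrt 3 * k / 2) := by positivity
  unfold Fr; nlinarith

lemma Fr_ne_zero_band (m : ℕ) {k : ℝ} (hk : 0 < k) (h1 : 2 * (m : ℝ) * Real.pi ≤ k)
    (h2 : k ≤ (2 * (m : ℝ) + 1) * Real.pi) : Fr k ≠ 0 := by
  rcases Nat.eq_zero_or_pos m with hm | hm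
  · subst hm
    simp only [Nat.cast_zero] at h2
    exact ne_of_lt (Fr_neg_of_le_pi hk (by linarith))
  · have hpi := Real.pi_gt_three
    have hm1 : (1 : ℝ) ≤ (m : ℝ) := by exact_mod_cast hm
    have hk6 : 6 ≤ k := by nlinarith
    obtain ⟨t, ht⟩ : ∃ t : ℝ, t = k / 2 - m * Real.pi := ⟨_, rfl⟩
    have ht0 : 0 ≤ t := by rw [ht]; nlinarith
    have ht1 : t ≤ Real.pi / 2 := by rw [ht]; nlinarith
    have hck : Real.cos (k / 2) = (-1 : ℝ) ^ m * Real.cos t := by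
      rw [show k / 2 = t + m * Real.pi by rw [ht]; ring, Real.cos_add_nat_mul_pi]
    have hsk : Real.sin (k / 2) = (-1 : ℝ) ^ m * Real.sin t := by
      rw [show k / 2 = t + m * Real.pi by rw [ht]; ring, Real.sin_add_nat_mul_pi]
    have hcosk : Real.cos k = Real.cos (2 * t) := by
      rw [show k = 2 * t + m * (2 * Real.pi) by rw [ht]; ring, Real.cos_add_nat_mul_two_pi]
    have hct0 : 0 ≤ Real.cos t := Real.cos_nonneg_of_mem_Icc ⟨by linarith, ht1⟩
    have hct1 : Real.cos t ≤ 1 := Real.cos_le_one t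
    have hst0 : 0 ≤ Real.sin t :=
      Real.sin_nonneg_of_nonneg_of_le_pi ht0 (by linarith)
    have hst1 : Real.sin t ≤ 1 := Real.sin_le_one t
    have hpy : Real.sin t ^ 2 + Real.cos t ^ 2 = 1 := Real.sin_sq_add_cos_sq t
    have hc2a : -1 ≤ Real.cos (2 * t) := Real.neg_one_le_cos _
    have hc2b : Real.cos (2 * t) ≤ 1 := Real.cos_le_one _
    have h3a : (1 : ℝ) ≤ Real.sqrt 3 := by
      nlinarith [Real.sq_sqrt (show (0:ℝ) ≤ 3 by norm_num), Real.sqrt_nonneg 3]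
    have harg : 3 ≤ Real.sqrt 3 * k / 2 := by nlinarith
    have hS3 : 3 ≤ Real.sinh (Real.sqrt 3 * k / 2) := by
      have := Real.self_le_sinh_iff.mpr (by linarith : (0:ℝ) ≤ Real.sqrt 3 * k / 2)
      linarith
    have hS0 : 0 ≤ Real.sinh (Real.sqrt 3 * k / 2) := by linarith
    have hCS : Real.sinh (Real.sqrt 3 * k / 2) ≤ Real.cosh (Real.sqrt 3 * k / 2) :=
      (Real.sinh_lt_cosh _).le
    have key : 3 ≤ Real.cos t * Real.cosh (Real.sqrt 3 * k / 2)
        + Real.sqrt 3 * Real.sin t * Real.sinh (Real.sqrt 3 * k / 2) := by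
      nlinarith [mul_nonneg hct0 (sub_nonneg.mpr hCS),
        mul_nonneg hS0 (mul_nonneg hct0 (sub_nonneg.mpr hct1)),
        mul_nonneg hS0 (mul_nonneg hst0 (sub_nonneg.mpr hst1)),
        mul_nonneg (mul_nonneg (sub_nonneg.mpr h3a) hst0) hS0]
    unfold Fr
    rw [hck, hsk, hcosk]
    rcases Nat.even_or_odd m with he | ho
    · rw [he.neg_one_pow]
      apply ne_of_lt
      ring_nf
      ring_nf at key hc2a hc2b
      linarith [key, hc2b]
    · rw [ho.neg_one_pow]
      apply ne_of_gt
      ring_nf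
      ring_nf at key hc2a hc2b
      linarith [key, hc2a]

theorem stmt_1 :
    (∀ k : ℝ, Δ k =
      ((2 * (Real.cos k - Real.cos (k / 2) * Real.cosh (Real.sqrt 3 * k / 2)
        - Real.sqrt 3 * Real.sin (k / 2) * Real.sinh (Real.sqrt 3 * k / 2)) : ℝ) : ℂ)) ∧
    (∀ k : ℝ, 0 < k → Δ k = 0 →
      ∃ n : ℕ, 1 ≤ n ∧ (2 * (n : ℝ) - 1) * Real.pi < k ∧ k < 2 * (n : ℝ) * Real.pi) ∧
    (∀ k : ℝ, 0 < k → k ≤ Real.pi → Δ k ≠ 0) := by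
  have hF : ∀ k : ℝ, Δ k = 0 → Fr k = 0 := by
    intro k hk
    rw [delta_eq] at hk
    have : (2 * (Real.cos k - Real.cos (k / 2) * Real.cosh (Real.sqrt 3 * k / 2)
        - Real.sqrt 3 * Real.sin (k / 2) * Real.sinh (Real.sqrt 3 * k / 2)) : ℝ) = 0 := by
      exact_mod_cast hk
    unfold Fr; linarith
  refine ⟨fun k => delta_eq k, ?_, ?_⟩
  · intro k hk hΔ
    have hFk := hF k hΔ
    have hpi := Real.pi_pos
    set j : ℕ := ⌊k / Real.pi⌋₊ with hj
    have hjl : (j : ℝ) * Real.pi ≤ k := by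
      have := Nat.floor_le (le_of_lt (div_pos hk hpi))
      rw [← hj] at this
      calc (j : ℝ) * Real.pi ≤ (k / Real.pi) * Real.pi := by nlinarith
        _ = k := by field_simp
    have hju : k < ((j : ℝ) + 1) * Real.pi := by
      have := Nat.lt_floor_add_one (k / Real.pi)
      rw [← hj] at this
      calc k = (k / Real.pi) * Real.pi := by field_simp
        _ < ((j : ℝ) + 1) * Real.pi := by nlinarith
    rcases Nat.even_or_odd j with ⟨m, hm⟩ | ⟨m, hm⟩
    · exfalso
      apply Fr_ne_zero_band m hk ?_ ?_ hFk
      · push_cast [hm] at hjl ⊢; linarith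
      · push_cast [hm] at hju ⊢; linarith
    · refine ⟨m + 1, le_add_self, ?_, ?_⟩
      · rcases lt_or_eq_of_le hjl with h | h
        · push_cast [hm] at h ⊢; linarith
        · exfalso
          apply Fr_ne_zero_band m hk ?_ ?_ hFk
          · push_cast [hm] at h ⊢; nlinarith
          · push_cast [hm] at h ⊢; nlinarith
      · push_cast [hm] at hju ⊢; linarith
  · intro k hk hk' hΔ
    exact absurd (hF k hΔ) (ne_of_lt (Fr_neg_of_le_pi hk hk'))
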